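/- Let α > 0 with α ≠ 1. Then there exists a constant C (depending only on α) such that for all real b and all R ≥ 0, |∫₀^R exp(i(b·e^x + e^{αx})) dx| ≤ C, and likewise |∫₀^R exp(i(b·e^x − e^{αx})) dx| ≤ C. -/

import Mathlib

open MeasureTheory Complex Set intervalIntegral

namespace Osc
noncomputable def P (α ε b x : ℝ) : ℝ := b * Real.exp ((1-α)*x) + ε * α
noncomputable def P' (α b x : ℝ) : ℝ := b * (1-α) * Real.exp ((1-α)*x)
noncomputable def F (α ε b x : ℝ) : ℝ := b * Real.exp x + ε * Real.exp (α * x)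
noncomputable def F' (α ε b x : ℝ) : ℝ := Real.exp (α*x) * P α ε b x
noncomputable def F'' (α ε b x : ℝ) : ℝ := Real.exp (α*x) * (α * P α ε b x + P' α b x)

lemma hasDerivAt_P (α ε b x : ℝ) : HasDerivAt (P α ε b) (P' α b x) x := by
  have h1 : HasDerivAt (fun x : ℝ => (1-α)*x) (1-α) x := by
    simpa using (hasDerivAt_id x).const_mul (1-α)
  have h2 := (h1.exp.const_mul b).add_const (ε*α)
  convert h2 using 1
  rfl; rfl; rfl
  simp [P']; ring

lemma hasDerivAt_F (α ε b x : ℝ) : HasDerivAt (F α ε b) (F' α ε b x) x := by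
  have h1 : HasDerivAt (fun x : ℝ => α*x) α x := by
    simpa using (hasDerivAt_id x).const_mul α
  have h2 := ((Real.hasDerivAt_exp x).const_mul b).add (h1.exp.const_mul ε)
  convert h2 using 1
  rfl; rfl; rfl
  have he : Real.exp (α*x) * Real.exp ((1-α)*x) = Real.exp x := by
    rw [← Real.exp_add]; congr 1; ring
  simp only [F', P, mul_add]
  rw [← mul_assoc, mul_comm (Real.exp (α*x)) b, mul_assoc, he]; ring

lemma hasDerivAt_F' (α ε b x : ℝ) : HasDerivAt (F' α ε b) (F'' α ε b x) x := by
  have h1 : HasDerivAt (fun x : ℝ => α*x) α x := by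
    simpa using (hasDerivAt_id x).const_mul α
  have h2 := h1.exp.mul (hasDerivAt_P α ε b x)
  convert h2 using 1
  rfl; rfl; rfl
  simp only [F'']; ring


lemma hasDerivAt_G (α ε b x : ℝ)
    (hasDerivAt_F : HasDerivAt (F α ε b) (F' α ε b x) x)
    (hasDerivAt_F' : HasDerivAt (F' α ε b) (F'' α ε b x) x)
    (hne : F' α ε b x ≠ 0) :
    HasDerivAt (fun x => Complex.exp (Complex.I * (F α ε b x : ℝ)) * (Complex.I * (F' α ε b x : ℝ))⁻¹)
      (Complex.exp (Complex.I * (F α ε b x : ℝ))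
        + Complex.I * Complex.exp (Complex.I * (F α ε b x : ℝ)) * ((F'' α ε b x : ℝ) / ((F' α ε b x : ℝ))^2)) x := by
  have hgd : HasDerivAt (fun x => Complex.exp (Complex.I * (F α ε b x : ℝ)))
      (Complex.exp (Complex.I * (F α ε b x : ℝ)) * (Complex.I * (F' α ε b x : ℝ))) x :=
    (hasDerivAt_F.ofReal_comp.const_mul Complex.I).cexp
  have hne' : Complex.I * (F' α ε b x : ℝ) ≠ 0 :=
    mul_ne_zero Complex.I_ne_zero (Complex.ofReal_ne_zero.mpr hne)
  have h0 : HasDerivAt (fun x : ℝ => Complex.I * ((F' α ε b x : ℝ) : ℂ))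
      (Complex.I * ((F'' α ε b x : ℝ) : ℂ)) x := hasDerivAt_F'.ofReal_comp.const_mul Complex.I
  have hinv : HasDerivAt (fun x => (Complex.I * (F' α ε b x : ℝ))⁻¹)
      (-(Complex.I * (F'' α ε b x : ℝ)) / (Complex.I * (F' α ε b x : ℝ))^2) x := by
    have := (hasDerivAt_inv hne').comp x h0
    convert this using 1
    rfl; rfl
    field_simp
  have h := hgd.mul hinv
  convert h using 1
  rfl; rfl
  have hne2 : ((F' α ε b x : ℝ) : ℂ) ≠ 0 := Complex.ofReal_ne_zero.mpr hne
  field_simp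
  ring_nf
  have h3 : (Complex.I)^3 = -Complex.I := by
    rw [pow_succ, Complex.I_sq]; ring
  rw [Complex.I_sq]; ring
lemma contP (α ε b : ℝ) : Continuous (P α ε b) := by
  unfold P; continuity
lemma contP' (α b : ℝ) : Continuous (P' α b) := by
  unfold P'; continuity
lemma contF' (α ε b : ℝ) : Continuous (F' α ε b) := by
  unfold F'
  exact (Real.continuous_exp.comp (continuous_const.mul continuous_id)).mul (contP α ε b)
lemma contF'' (α ε b : ℝ) : Continuous (F'' α ε b) := by
  unfold F''
  exact (Real.continuous_exp.comp (continuous_const.mul continuous_id)).mul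
    ((continuous_const.mul (contP α ε b)).add (contP' α b))
lemma contg (α ε b : ℝ) : Continuous (fun x => Complex.exp (Complex.I * (F α ε b x : ℝ))) := by
  unfold F; continuity

lemma good_bound (α : ℝ) (hα : 0 < α) (ε b a c : ℝ) (ha : 0 ≤ a) (hac : a ≤ c)
    (hP : ∀ x ∈ Set.Icc a c, α/2 ≤ |P α ε b x|) :
    ‖∫ x in a..c, Complex.exp (Complex.I * (F α ε b x : ℝ))‖ ≤ 10/α := by
  have huIcc : Set.uIcc a c = Set.Icc a c := Set.uIcc_of_le hac
  have hα2 : (0:ℝ) < α/2 := by positivity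
  have hPne : ∀ x ∈ Set.Icc a c, P α ε b x ≠ 0 := fun x hx =>
    abs_pos.mp (lt_of_lt_of_le hα2 (hP x hx))
  have hF'ne : ∀ x ∈ Set.Icc a c, F' α ε b x ≠ 0 := fun x hx =>
    mul_ne_zero (Real.exp_ne_zero _) (hPne x hx)
  have hF'lb : ∀ x ∈ Set.Icc a c, α/2 ≤ |F' α ε b x| := by
    intro x hx
    have hx0 : 0 ≤ x := le_trans ha hx.1
    have h1 : (1:ℝ) ≤ Real.exp (α*x) := Real.one_le_exp (by positivity)
    calc α/2 ≤ |P α ε b x| := hP x hx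
    _ = 1 * |P α ε b x| := (one_mul _).symm
    _ ≤ Real.exp (α*x) * |P α ε b x| := mul_le_mul_of_nonneg_right h1 (abs_nonneg _)
    _ = |F' α ε b x| := by rw [F', abs_mul, abs_of_pos (Real.exp_pos _)]
  -- the correction term
  set h2 : ℝ → ℂ := fun x => Complex.I * Complex.exp (Complex.I * (F α ε b x : ℝ)) *
      ((F'' α ε b x : ℝ) / ((F' α ε b x : ℝ))^2) with hh2
  have hconth2 : ContinuousOn h2 (Set.Icc a c) := by
    apply ContinuousOn.mul
    · exact (continuous_const.mul (contg α ε b)).continuousOn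
    · apply ContinuousOn.div
      · exact (Complex.continuous_ofReal.comp (contF'' α ε b)).continuousOn
      · exact ((Complex.continuous_ofReal.comp (contF' α ε b)).pow 2).continuousOn
      · exact fun x hx => pow_ne_zero 2 (Complex.ofReal_ne_zero.mpr (hF'ne x hx))
  have hint1 : IntervalIntegrable (fun x => Complex.exp (Complex.I * (F α ε b x : ℝ))) volume a c :=
    (contg α ε b).intervalIntegrable _ _
  have hint2 : IntervalIntegrable h2 volume a c := by
    apply ContinuousOn.intervalIntegrable; rw [huIcc]; exact hconth2
  have hFTC : (∫ x in a..c, (Complex.exp (Complex.I * (F α ε b x : ℝ)) + h2 x))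
      = Complex.exp (Complex.I * (F α ε b c : ℝ)) * (Complex.I * (F' α ε b c : ℝ))⁻¹
        - Complex.exp (Complex.I * (F α ε b a : ℝ)) * (Complex.I * (F' α ε b a : ℝ))⁻¹ := by
    apply intervalIntegral.integral_eq_sub_of_hasDerivAt
    · intro x hx
      rw [huIcc] at hx
      exact hasDerivAt_G α ε b x (hasDerivAt_F α ε b x) (hasDerivAt_F' α ε b x) (hF'ne x hx)
    · exact hint1.add hint2
  rw [intervalIntegral.integral_add hint1 hint2] at hFTC
  have hsplit : (∫ x in a..c, Complex.exp (Complex.I * (F α ε b x : ℝ)))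
      = Complex.exp (Complex.I * (F α ε b c : ℝ)) * (Complex.I * (F' α ε b c : ℝ))⁻¹
        - Complex.exp (Complex.I * (F α ε b a : ℝ)) * (Complex.I * (F' α ε b a : ℝ))⁻¹
        - ∫ x in a..c, h2 x := by
    rw [← hFTC]; ring
  -- endpoint norms
  have hGnorm : ∀ x ∈ Set.Icc a c,
      ‖Complex.exp (Complex.I * (F α ε b x : ℝ)) * (Complex.I * (F' α ε b x : ℝ))⁻¹‖ ≤ 2/α := by
    intro x hx
    have h1 : ‖Complex.exp (Complex.I * ((F α ε b x : ℝ):ℂ))‖ = 1 := by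
      simp [Complex.norm_exp]
    rw [norm_mul, norm_inv, norm_mul, h1, Complex.norm_I, Complex.norm_real, one_mul, one_mul,
      Real.norm_eq_abs]
    calc |F' α ε b x|⁻¹ ≤ (α/2)⁻¹ := by
          exact inv_anti₀ hα2 (hF'lb x hx)
    _ = 2/α := by rw [inv_div]
  -- pointwise bound on correction term
  have hbnd : ∀ x ∈ Set.Icc a c,
      ‖h2 x‖ ≤ 2 * Real.exp (-(α*x)) + |P' α b x| / (P α ε b x)^2 := by
    intro x hx
    have h1 : ‖Complex.exp (Complex.I * ((F α ε b x : ℝ):ℂ))‖ = 1 := by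
      simp [Complex.norm_exp]
    have hnorm : ‖h2 x‖ = |F'' α ε b x| / (F' α ε b x)^2 := by
      rw [hh2]
      rw [norm_mul, norm_mul, Complex.norm_I, h1, norm_div, norm_pow, Complex.norm_real,
        Complex.norm_real, Real.norm_eq_abs, Real.norm_eq_abs, _root_.sq_abs, one_mul, one_mul]
    rw [hnorm]
    set p := P α ε b x with hp
    set q := P' α b x with hq
    set E := Real.exp (α*x) with hE
    have hx0 : 0 ≤ x := le_trans ha hx.1
    have hE1 : (1:ℝ) ≤ E := Real.one_le_exp (by positivity)
    have hE0 : (0:ℝ) < E := Real.exp_pos _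
    have hplb : α/2 ≤ |p| := hP x hx
    have hpne : p ≠ 0 := hPne x hx
    have hFeq : F'' α ε b x = E * (α * p + q) := rfl
    have hF'eq : F' α ε b x = E * p := rfl
    rw [hFeq, hF'eq, Real.exp_neg, abs_mul, abs_of_pos hE0, mul_pow]
    rw [div_le_iff₀ (by positivity)]
    have habs : |α * p + q| ≤ α * |p| + |q| := by
      calc |α * p + q| ≤ |α * p| + |q| := abs_add_le _ _
      _ = α * |p| + |q| := by rw [abs_mul, abs_of_pos hα]
    have hap : α * |p| ≤ 2 * p^2 := by nlinarith [_root_.sq_abs p, abs_nonneg p]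
    have hRHS : (2 * E⁻¹ + |q| / p^2) * (E^2 * p^2) = 2*E*p^2 + E^2*|q| := by
      field_simp
    rw [hRHS]
    nlinarith [mul_le_mul_of_nonneg_left habs hE0.le, mul_le_mul_of_nonneg_left hap hE0.le,
      mul_nonneg (mul_nonneg hE0.le (sub_nonneg.mpr hE1)) (abs_nonneg q)]
  -- antiderivative of P'/P^2
  have hK : ∀ x ∈ Set.uIcc a c, HasDerivAt (fun y => -(P α ε b y)⁻¹) (P' α b x / (P α ε b x)^2) x := by
    intro x hx
    rw [huIcc] at hx
    have h := ((hasDerivAt_P α ε b x).inv (hPne x hx)).neg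
    convert h using 1
    rfl; rfl; rfl
    field_simp
  have hintPP : IntervalIntegrable (fun x => P' α b x / (P α ε b x)^2) volume a c := by
    apply ContinuousOn.intervalIntegrable; rw [huIcc]
    exact (contP' α b).continuousOn.div ((contP α ε b).pow 2).continuousOn
      (fun x hx => pow_ne_zero 2 (hPne x hx))
  have hI2 : ∫ x in a..c, P' α b x / (P α ε b x)^2 = (P α ε b a)⁻¹ - (P α ε b c)⁻¹ := by
    rw [intervalIntegral.integral_eq_sub_of_hasDerivAt hK hintPP]; ring
  set s : ℝ := if 0 ≤ b*(1-α) then 1 else -1 with hs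
  have habsP' : ∀ x : ℝ, |P' α b x| = s * P' α b x := by
    intro x
    rw [hs, P']
    split_ifs with h
    · rw [one_mul, _root_.abs_of_nonneg (mul_nonneg h (Real.exp_pos _).le)]
    · push_neg at h
      rw [_root_.abs_of_neg (mul_neg_of_neg_of_pos h (Real.exp_pos _))]
      ring
  have habsint : ∫ x in a..c, |P' α b x| / (P α ε b x)^2
      = s * ((P α ε b a)⁻¹ - (P α ε b c)⁻¹) := by
    rw [← hI2, ← intervalIntegral.integral_const_mul]
    apply intervalIntegral.integral_congr
    intro x hx
    simp only [habsP']; ring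
  have hPinv : ∀ x ∈ Set.Icc a c, |(P α ε b x)⁻¹| ≤ 2/α := by
    intro x hx
    rw [abs_inv]
    calc |P α ε b x|⁻¹ ≤ (α/2)⁻¹ := inv_anti₀ hα2 (hP x hx)
    _ = 2/α := by rw [inv_div]
  have hI2bound : ∫ x in a..c, |P' α b x| / (P α ε b x)^2 ≤ 4/α := by
    rw [habsint]
    have h1 := hPinv a ⟨le_refl a, hac⟩
    have h2 := hPinv c ⟨hac, le_refl c⟩
    have hs1 : |s| ≤ 1 := by rw [hs]; split_ifs <;> norm_num
    calc s * ((P α ε b a)⁻¹ - (P α ε b c)⁻¹) ≤ |s * ((P α ε b a)⁻¹ - (P α ε b c)⁻¹)| :=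
          le_abs_self _
    _ = |s| * |(P α ε b a)⁻¹ - (P α ε b c)⁻¹| := abs_mul _ _
    _ ≤ 1 * (|(P α ε b a)⁻¹| + |(P α ε b c)⁻¹|) := by
          apply mul_le_mul hs1 _ (abs_nonneg _) zero_le_one
          calc |(P α ε b a)⁻¹ - (P α ε b c)⁻¹| = |(P α ε b a)⁻¹ + -(P α ε b c)⁻¹| := by
                rw [sub_eq_add_neg]
          _ ≤ |(P α ε b a)⁻¹| + |-(P α ε b c)⁻¹| := abs_add_le _ _
          _ = |(P α ε b a)⁻¹| + |(P α ε b c)⁻¹| := by rw [abs_neg]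
    _ ≤ 4/α := by
          rw [one_mul]
          have h44 : 2/α + 2/α = 4/α := by ring
          linarith
  -- exponential integral
  have hexpD : ∀ x ∈ Set.uIcc a c,
      HasDerivAt (fun y => -Real.exp (-(α*y))/α) (Real.exp (-(α*x))) x := by
    intro x _
    have h0 : HasDerivAt (fun y : ℝ => α*y) α x := by simpa using (hasDerivAt_id x).const_mul α
    have h2 := (h0.neg.exp.div_const α).neg
    have hα0 : α ≠ 0 := ne_of_gt hα
    convert h2 using 1
    rfl; rfl
    · funext y; simp only [Pi.neg_apply]; ring
    · simp only [Pi.neg_apply]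
      rw [show -(Real.exp (-(α*x)) * -α / α) = Real.exp (-(α*x)) * (α/α) by ring, div_self hα0,
        mul_one]
  have hintexp : IntervalIntegrable (fun x => Real.exp (-(α*x))) volume a c :=
    (Real.continuous_exp.comp (continuous_const.mul continuous_id).neg).intervalIntegrable _ _
  have hIexp : ∫ x in a..c, Real.exp (-(α*x)) ≤ 1/α := by
    rw [intervalIntegral.integral_eq_sub_of_hasDerivAt hexpD hintexp]
    have e1 : Real.exp (-(α*a)) ≤ 1 := by
      have : Real.exp (-(α*a)) ≤ Real.exp 0 := Real.exp_le_exp.mpr (by nlinarith)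
      rwa [Real.exp_zero] at this
    have e2 : 0 < Real.exp (-(α*c)) := Real.exp_pos _
    have heq : -Real.exp (-(α*c))/α - -Real.exp (-(α*a))/α
        = (Real.exp (-(α*a)) - Real.exp (-(α*c)))/α := by ring
    rw [heq]
    gcongr
    linarith
  -- bound on correction integral
  have hintabs : IntervalIntegrable (fun x => |P' α b x| / (P α ε b x)^2) volume a c := by
    apply ContinuousOn.intervalIntegrable; rw [huIcc]
    exact (contP' α b).abs.continuousOn.div ((contP α ε b).pow 2).continuousOn
      (fun x hx => pow_ne_zero 2 (hPne x hx))
  have hnormint : ‖∫ x in a..c, h2 x‖ ≤ 6/α := by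
    have hb1 : ‖∫ x in a..c, h2 x‖ ≤ ∫ x in a..c, ‖h2 x‖ :=
      intervalIntegral.norm_integral_le_integral_norm hac
    have hintn : IntervalIntegrable (fun x => ‖h2 x‖) volume a c := by
      apply ContinuousOn.intervalIntegrable; rw [huIcc]; exact hconth2.norm
    have hintB : IntervalIntegrable
        (fun x => 2*Real.exp (-(α*x)) + |P' α b x|/(P α ε b x)^2) volume a c :=
      (hintexp.const_mul 2).add hintabs
    have hb2 : (∫ x in a..c, ‖h2 x‖)
        ≤ ∫ x in a..c, (2*Real.exp (-(α*x)) + |P' α b x|/(P α ε b x)^2) :=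
      intervalIntegral.integral_mono_on hac hintn hintB hbnd
    have hb3 : (∫ x in a..c, (2*Real.exp (-(α*x)) + |P' α b x|/(P α ε b x)^2))
        = 2*(∫ x in a..c, Real.exp (-(α*x))) + ∫ x in a..c, |P' α b x|/(P α ε b x)^2 := by
      rw [intervalIntegral.integral_add (hintexp.const_mul 2) hintabs,
        intervalIntegral.integral_const_mul]
    have hfin : 2*(1/α) + 4/α = 6/α := by ring
    rw [hb3] at hb2
    have := hI2bound
    nlinarith [hIexp]
  -- combine everything
  rw [hsplit]
  have h1 := hGnorm a ⟨le_refl a, hac⟩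
  have h2' := hGnorm c ⟨hac, le_refl c⟩
  have hfinal : (2:ℝ)/α + 2/α + 6/α = 10/α := by ring
  calc ‖cexp (Complex.I * (F α ε b c : ℝ)) * (Complex.I * (F' α ε b c : ℝ))⁻¹
        - cexp (Complex.I * (F α ε b a : ℝ)) * (Complex.I * (F' α ε b a : ℝ))⁻¹
        - ∫ x in a..c, h2 x‖
      ≤ ‖cexp (Complex.I * (F α ε b c : ℝ)) * (Complex.I * (F' α ε b c : ℝ))⁻¹
        - cexp (Complex.I * (F α ε b a : ℝ)) * (Complex.I * (F' α ε b a : ℝ))⁻¹‖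
        + ‖∫ x in a..c, h2 x‖ := norm_sub_le _ _
    _ ≤ ‖cexp (Complex.I * (F α ε b c : ℝ)) * (Complex.I * (F' α ε b c : ℝ))⁻¹‖
        + ‖cexp (Complex.I * (F α ε b a : ℝ)) * (Complex.I * (F' α ε b a : ℝ))⁻¹‖
        + ‖∫ x in a..c, h2 x‖ := by
          have := norm_sub_le (cexp (Complex.I * (F α ε b c : ℝ)) * (Complex.I * (F' α ε b c : ℝ))⁻¹)
            (cexp (Complex.I * (F α ε b a : ℝ)) * (Complex.I * (F' α ε b a : ℝ))⁻¹)
          linarith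
    _ ≤ 10/α := by rw [← hfinal]; exact add_le_add (add_le_add h2' h1) hnormint


lemma main_bound (α : ℝ) (hα : 0 < α) (hα1 : α ≠ 1) (ε b R : ℝ) (hε : ε = 1 ∨ ε = -1)
    (hR : 0 ≤ R) :
    ‖∫ x in (0:ℝ)..R, Complex.exp (Complex.I * (F α ε b x : ℝ))‖
      ≤ 20/α + Real.log 3 / |1-α| := by
  have hαne : (1:ℝ) - α ≠ 0 := sub_ne_zero.mpr (fun h => hα1 h.symm)
  have habsαne : (0:ℝ) < |1-α| := abs_pos.mpr hαne
  have hlog3 : 0 ≤ Real.log 3 := Real.log_nonneg (by norm_num)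
  set L := Real.log 3 / |1-α| with hLdef
  have hL : 0 ≤ L := div_nonneg hlog3 (abs_nonneg _)
  have hεabs : |ε| = 1 := by rcases hε with h|h <;> rw [h] <;> norm_num
  have h1020 : 10/α ≤ 20/α := by rw [div_le_div_iff₀ hα hα]; nlinarith
  set T := {x : ℝ | x ∈ Set.Icc 0 R ∧ |P α ε b x| < α/2} with hTdef
  have hnotT : ∀ y, y ∈ Set.Icc 0 R → y ∉ T → α/2 ≤ |P α ε b y| :=
    fun y h1 h2 => le_of_not_gt (fun hlt => h2 ⟨h1, hlt⟩)
  by_cases hTne : T.Nonempty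
  case neg =>
    have hgood : ∀ x ∈ Set.Icc 0 R, α/2 ≤ |P α ε b x| :=
      fun x hx => hnotT x hx (fun hmem => hTne ⟨x, hmem⟩)
    have := good_bound α hα ε b 0 R le_rfl hR hgood
    linarith
  case pos =>
  obtain ⟨x₀, hx₀⟩ := hTne
  have hbne : b ≠ 0 := by
    intro hb0
    have := hx₀.2
    rw [P, hb0, zero_mul, zero_add, abs_mul, hεabs, one_mul, abs_of_pos hα] at this
    linarith
  have hb : (0:ℝ) < |b| := abs_pos.mpr hbne
  have hTb : ∀ x ∈ T, α/2 < |b| * Real.exp ((1-α)*x) ∧ |b| * Real.exp ((1-α)*x) < 3*α/2 := by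
    intro x hx
    have hPx := hx.2
    have hv : |ε * α| = α := by rw [abs_mul, hεabs, one_mul, abs_of_pos hα]
    have hu : |b * Real.exp ((1-α)*x)| = |b| * Real.exp ((1-α)*x) := by
      rw [abs_mul, abs_of_pos (Real.exp_pos _)]
    have t1 : |ε * α| ≤ |P α ε b x| + |b * Real.exp ((1-α)*x)| := by
      calc |ε * α| = |(P α ε b x) + (-(b * Real.exp ((1-α)*x)))| := by rw [P]; ring_nf
      _ ≤ |P α ε b x| + |-(b * Real.exp ((1-α)*x))| := abs_add_le _ _
      _ = |P α ε b x| + |b * Real.exp ((1-α)*x)| := by rw [abs_neg]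
    have t2 : |b * Real.exp ((1-α)*x)| ≤ |P α ε b x| + |ε * α| := by
      calc |b * Real.exp ((1-α)*x)| = |(P α ε b x) + (-(ε * α))| := by rw [P]; ring_nf
      _ ≤ |P α ε b x| + |-(ε * α)| := abs_add_le _ _
      _ = |P α ε b x| + |ε * α| := by rw [abs_neg]
    rw [hv] at t1 t2
    rw [hu] at t1 t2
    constructor <;> linarith
  have hdiam : ∀ x ∈ T, ∀ y ∈ T, |x - y| ≤ L := by
    have key : ∀ x ∈ T, ∀ y ∈ T, (1-α)*(x-y) ≤ Real.log 3 := by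
      intro x hx y hy
      have e1 := (hTb x hx).2
      have e2 := (hTb y hy).1
      have h3 : |b| * Real.exp ((1-α)*x) < 3 * (|b| * Real.exp ((1-α)*y)) := by linarith
      have e3 : Real.exp ((1-α)*x) < 3 * Real.exp ((1-α)*y) := by nlinarith
      have e4 : (1-α)*x < Real.log 3 + (1-α)*y := by
        have := Real.log_lt_log (Real.exp_pos _) e3
        rwa [Real.log_exp, Real.log_mul (by norm_num) (Real.exp_ne_zero _), Real.log_exp] at this
      nlinarith
    intro x hx y hy
    have k1 := key x hx y hy
    have k2 := key y hy x hx
    have habs : |(1-α)*(x-y)| ≤ Real.log 3 := by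
      rw [abs_le]
      constructor <;> nlinarith
    rw [abs_mul] at habs
    have hmul : |x-y| * |1-α| ≤ Real.log 3 := by rw [mul_comm]; exact habs
    rw [hLdef]
    exact (le_div_iff₀ habsαne).mpr hmul
  -- inf and sup of T
  have hbddB : BddBelow T := ⟨0, fun x hx => hx.1.1⟩
  have hbddA : BddAbove T := ⟨R, fun x hx => hx.1.2⟩
  set a := sInf T with hadef
  set c := sSup T with hcdef
  have hTne' : T.Nonempty := ⟨x₀, hx₀⟩
  have ha0 : 0 ≤ a := le_csInf hTne' (fun x hx => hx.1.1)
  have hcR : c ≤ R := csSup_le hTne' (fun x hx => hx.1.2)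
  have hac : a ≤ c := csInf_le_csSup hTne' hbddB hbddA
  have h0c : 0 ≤ c := le_trans ha0 hac
  have haR : a ≤ R := le_trans hac hcR
  have hca : c - a ≤ L := by
    have hc' : c ≤ a + L := by
      apply csSup_le hTne'
      intro x hx
      have : x - L ≤ a := by
        apply le_csInf hTne'
        intro y hy
        have := hdiam x hx y hy
        have h5 : x - y ≤ |x - y| := le_abs_self _
        linarith
      linarith
    linarith
  -- not in T on each side
  have hbelow : ∀ y, 0 ≤ y → y < a → α/2 ≤ |P α ε b y| := by
    intro y h1 h2
    refine hnotT y ⟨h1, by linarith⟩ (fun hmem => ?_)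
    exact absurd (csInf_le hbddB hmem) (not_le.mpr h2)
  have habove : ∀ y, c < y → y ≤ R → α/2 ≤ |P α ε b y| := by
    intro y h1 h2
    refine hnotT y ⟨by linarith, h2⟩ (fun hmem => ?_)
    exact absurd (le_csSup hbddA hmem) (not_le.mpr h1)
  -- three bounds
  have bound1 : ‖∫ x in (0:ℝ)..a, Complex.exp (Complex.I * (F α ε b x : ℝ))‖ ≤ 10/α := by
    rcases eq_or_lt_of_le ha0 with h|h
    · rw [← h, intervalIntegral.integral_same]; rw [norm_zero]; positivity
    · apply good_bound α hα ε b 0 a le_rfl ha0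
      intro x hx
      rcases eq_or_lt_of_le hx.2 with hxa|hxa
      · rw [hxa]
        have hlim : Filter.Tendsto (fun y => |P α ε b y|) (nhdsWithin a (Set.Iio a))
            (nhds |P α ε b a|) := ((contP α ε b).abs.tendsto a).mono_left nhdsWithin_le_nhds
        apply ge_of_tendsto hlim
        filter_upwards [Ioo_mem_nhdsLT_of_mem ⟨h, le_refl a⟩] with y hy
        exact hbelow y hy.1.le hy.2
      · exact hbelow x hx.1 hxa
  have bound3 : ‖∫ x in c..R, Complex.exp (Complex.I * (F α ε b x : ℝ))‖ ≤ 10/α := by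
    rcases eq_or_lt_of_le hcR with h|h
    · rw [h, intervalIntegral.integral_same]; rw [norm_zero]; positivity
    · apply good_bound α hα ε b c R h0c hcR
      intro x hx
      rcases eq_or_lt_of_le hx.1 with hxc|hxc
      · rw [← hxc]
        have hlim : Filter.Tendsto (fun y => |P α ε b y|) (nhdsWithin c (Set.Ioi c))
            (nhds |P α ε b c|) := ((contP α ε b).abs.tendsto c).mono_left nhdsWithin_le_nhds
        apply ge_of_tendsto hlim
        filter_upwards [Ioo_mem_nhdsGT_of_mem ⟨le_refl c, h⟩] with y hy
        exact habove y hy.1 hy.2.le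
      · exact habove x hxc hx.2
  have bound2 : ‖∫ x in a..c, Complex.exp (Complex.I * (F α ε b x : ℝ))‖ ≤ L := by
    have hnorm1 : ∀ x ∈ Set.uIoc a c, ‖Complex.exp (Complex.I * (F α ε b x : ℝ))‖ ≤ 1 := by
      intro x _
      have : ‖Complex.exp (Complex.I * ((F α ε b x : ℝ):ℂ))‖ = 1 := by
        simp [Complex.norm_exp]
      rw [this]
    calc ‖∫ x in a..c, Complex.exp (Complex.I * (F α ε b x : ℝ))‖ ≤ 1 * |c - a| :=
          intervalIntegral.norm_integral_le_of_norm_le_const hnorm1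
    _ = c - a := by rw [one_mul, _root_.abs_of_nonneg (show (0:ℝ) ≤ c - a by linarith)]
    _ ≤ L := hca
  -- combine
  have hi1 : IntervalIntegrable (fun x => Complex.exp (Complex.I * (F α ε b x : ℝ))) volume 0 a :=
    (contg α ε b).intervalIntegrable _ _
  have hi2 : IntervalIntegrable (fun x => Complex.exp (Complex.I * (F α ε b x : ℝ))) volume a c :=
    (contg α ε b).intervalIntegrable _ _
  have hi3 : IntervalIntegrable (fun x => Complex.exp (Complex.I * (F α ε b x : ℝ))) volume c R :=
    (contg α ε b).intervalIntegrable _ _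
  have e1 := intervalIntegral.integral_add_adjacent_intervals hi1 hi2
  have hi12 : IntervalIntegrable (fun x => Complex.exp (Complex.I * (F α ε b x : ℝ))) volume 0 c :=
    (contg α ε b).intervalIntegrable _ _
  have e2 := intervalIntegral.integral_add_adjacent_intervals hi12 hi3
  rw [← e2, ← e1]
  calc ‖((∫ x in (0:ℝ)..a, Complex.exp (Complex.I * (F α ε b x : ℝ)))
        + ∫ x in a..c, Complex.exp (Complex.I * (F α ε b x : ℝ)))
        + ∫ x in c..R, Complex.exp (Complex.I * (F α ε b x : ℝ))‖
      ≤ ‖(∫ x in (0:ℝ)..a, Complex.exp (Complex.I * (F α ε b x : ℝ)))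
        + ∫ x in a..c, Complex.exp (Complex.I * (F α ε b x : ℝ))‖
        + ‖∫ x in c..R, Complex.exp (Complex.I * (F α ε b x : ℝ))‖ := norm_add_le _ _
    _ ≤ (‖∫ x in (0:ℝ)..a, Complex.exp (Complex.I * (F α ε b x : ℝ))‖
        + ‖∫ x in a..c, Complex.exp (Complex.I * (F α ε b x : ℝ))‖)
        + ‖∫ x in c..R, Complex.exp (Complex.I * (F α ε b x : ℝ))‖ := by
          have := norm_add_le (∫ x in (0:ℝ)..a, Complex.exp (Complex.I * (F α ε b x : ℝ)))
            (∫ x in a..c, Complex.exp (Complex.I * (F α ε b x : ℝ)))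
          linarith
    _ ≤ 20/α + L := by
          have h2020 : 10/α + L + 10/α = 20/α + L := by ring
          linarith

end Osc

/-- Uniform boundedness of the oscillatory integrals
`∫₀^R exp(i(b·e^x ± e^{αx})) dx` for `α > 0`, `α ≠ 1`, with a constant
depending only on `α`. -/
theorem stmt_1 (α : ℝ) (hα : 0 < α) (hα1 : α ≠ 1) :
    ∃ C : ℝ, ∀ b R : ℝ, 0 ≤ R →
      ‖∫ x in (0:ℝ)..R,
          Complex.exp (Complex.I * (b * Real.exp x + Real.exp (α * x)))‖ ≤ C ∧
      ‖∫ x in (0:ℝ)..R,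
          Complex.exp (Complex.I * (b * Real.exp x - Real.exp (α * x)))‖ ≤ C := by
  refine ⟨20/α + Real.log 3 / |1-α|, fun b R hR => ⟨?_, ?_⟩⟩
  · have h := Osc.main_bound α hα hα1 1 b R (Or.inl rfl) hR
    have heq : ∀ x : ℝ, Complex.I * ((b:ℂ) * (Real.exp x : ℂ) + (Real.exp (α*x) : ℂ))
        = Complex.I * ((Osc.F α 1 b x : ℝ) : ℂ) := by
      intro x; rw [Osc.F]; push_cast; ring
    simp only [heq]
    exact h
  · have h := Osc.main_bound α hα hα1 (-1) b R (Or.inr rfl) hR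
    have heq : ∀ x : ℝ, Complex.I * ((b:ℂ) * (Real.exp x : ℂ) - (Real.exp (α*x) : ℂ))
        = Complex.I * ((Osc.F α (-1) b x : ℝ) : ℂ) := by
      intro x; rw [Osc.F]; push_cast; ring
    simp only [heq]
    exact h
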